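/- arXiv:2509.07926 — 2 statements merged into one kernel-verified Lean document; each statement's English description precedes it below -/
import Mathlib

section
/- Let k ≥ 3 be an integer. Then W_c(k,2) > k(k−1); equivalently, there exists an integer M ≥ k(k−1) and a 2-coloring of Z_M with no monochromatic k-term cyclic arithmetic progression mod M, for every candidate value N ≤ k(k−1) of W_c(k,2). -/
/-- `A` is a `k`-term cyclic arithmetic progression mod `N` with common difference `d`:
it is a `k`-element subset of `ZMod N` whose elements are `t, t+d, …, t+(k-1)d`. -/
def IsAPWith (N k : ℕ) (A : Finset (ZMod N)) (d : ZMod N) : Prop :=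
  A.card = k ∧ ∃ t : ZMod N, A = (Finset.range k).image (fun i : ℕ => t + (i : ZMod N) * d)

/-- `A` is a `k`-term cyclic arithmetic progression mod `N`. -/
def IsAP (N k : ℕ) (A : Finset (ZMod N)) : Prop :=
  ∃ d : ZMod N, IsAPWith N k A d

/-- `D(N,k)`: the set of values `gcd(d,k)` where `d` ranges over all `d ∈ {1,…,N-1}` that are
a common difference of some `k`-term cyclic arithmetic progression mod `N`. -/
def Ddiff (N k : ℕ) : Set ℕ :=
  {g | ∃ d : ℕ, 1 ≤ d ∧ d ≤ N - 1 ∧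
    (∃ A : Finset (ZMod N), IsAPWith N k A (d : ZMod N)) ∧ g = Nat.gcd d k}

/-- `b(N,k)`: the maximum size of a subset of `ZMod N` containing no `k`-term cyclic
arithmetic progression mod `N`. -/
noncomputable def bNum (N k : ℕ) : ℕ :=
  sSup {n | ∃ B : Finset (ZMod N), B.card = n ∧ ∀ A ⊆ B, ¬ IsAP N k A}

/-- `χ(N,k)`: the minimum number of parts needed to partition `ZMod N` into subsets none of
which contains a `k`-term cyclic arithmetic progression mod `N` (phrased via colorings). -/
noncomputable def chiNum (N k : ℕ) : ℕ :=
  sInf {r | ∃ c : ZMod N → Fin r, ∀ A : Finset (ZMod N), IsAP N k A → ¬ ∃ i, ∀ x ∈ A, c x = i}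


/-- Core combinatorial lemma: an arithmetic progression mod `2b` with difference
`e`, `1 ≤ e < 2b`, cannot have `b+1` consecutive terms all in the same block. -/
lemma core_lemma (b e Q col : ℕ) (hb : 1 ≤ b) (he1 : 1 ≤ e) (he2 : e < 2*b)
    (H : ∀ i ≤ b, (Q + i*e) % (2*b) / b = col) : False := by
  set n := 2*b with hn
  have hb0 : 0 < b := hb
  have hn0 : 0 < n := by omega
  have hbound : ∀ i ≤ b, b * col ≤ (Q + i*e) % n ∧ (Q + i*e) % n < b * col + b := by
    intro i hi
    have h := H i hi
    have h1 := Nat.div_add_mod ((Q + i*e) % n) b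
    have h2 : (Q + i*e) % n % b < b := Nat.mod_lt _ hb0
    rw [h] at h1
    omega
  set q : ℕ → ℤ := fun i => (((Q + i*e) % n : ℕ) : ℤ) with hq
  have hqmod : ∀ i : ℕ, q i ≡ (Q : ℤ) + i * e [ZMOD (n:ℤ)] := by
    intro i
    have h1 : q i = ((Q + i*e : ℕ) : ℤ) % (n : ℤ) := by
      simp only [hq]
      exact Int.natCast_mod _ _
    have h2 : ((Q + i*e : ℕ) : ℤ) = (Q : ℤ) + i * e := by push_cast; ring
    rw [h1, h2]
    show ((Q : ℤ) + i * e) % n % n = ((Q : ℤ) + i * e) % n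
    exact Int.emod_emod_of_dvd _ dvd_rfl
  have hdiffbound : ∀ i ≤ b, ∀ j ≤ b, |q i - q j| < (b : ℤ) := by
    intro i hi j hj
    have h1 := hbound i hi
    have h2 := hbound j hj
    have h1a : ((b * col : ℕ) : ℤ) ≤ q i := by simp only [hq]; exact_mod_cast h1.1
    have h1b : q i < ((b * col + b : ℕ) : ℤ) := by simp only [hq]; exact_mod_cast h1.2
    have h2a : ((b * col : ℕ) : ℤ) ≤ q j := by simp only [hq]; exact_mod_cast h2.1
    have h2b : q j < ((b * col + b : ℕ) : ℤ) := by simp only [hq]; exact_mod_cast h2.2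
    rw [abs_lt]
    push_cast at h1a h1b h2a h2b ⊢
    constructor <;> linarith
  set δ : ℤ := q 1 - q 0 with hδ
  have hδe : δ ≡ (e : ℤ) [ZMOD (n:ℤ)] := by
    have := (hqmod 1).sub (hqmod 0)
    simpa using this
  have hstep : ∀ i, i + 1 ≤ b → q (i+1) - q i = δ := by
    intro i hi
    have h1 := (hqmod (i+1)).sub (hqmod i)
    have h2 : q (i+1) - q i ≡ (e:ℤ) [ZMOD (n:ℤ)] := by
      have he : ((Q:ℤ) + (↑(i+1)) * e) - ((Q:ℤ) + i * e) = (e : ℤ) := by push_cast; ring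
      rwa [he] at h1
    have h3 : (q (i+1) - q i) - δ ≡ 0 [ZMOD (n:ℤ)] := by
      simpa using h2.sub hδe
    have hd : (n:ℤ) ∣ (q (i+1) - q i) - δ := by
      have h4 := h3.dvd
      rw [zero_sub] at h4
      exact dvd_neg.mp h4
    have habs : |(q (i+1) - q i) - δ| < (n:ℤ) := by
      have a1 := hdiffbound (i+1) hi i (by omega)
      have a2 := hdiffbound 1 hb 0 (by omega)
      calc |(q (i+1) - q i) - δ| ≤ |q (i+1) - q i| + |δ| := abs_sub _ _
        _ < b + b := by exact add_lt_add a1 a2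
        _ = (n:ℤ) := by push_cast [hn]; ring
    have := Int.eq_zero_of_abs_lt_dvd hd habs
    linarith
  have hlin : ∀ i, i ≤ b → q i = q 0 + i * δ := by
    intro i
    induction i with
    | zero => intro _; simp
    | succ m ih =>
      intro hm
      have h1 := ih (by omega)
      have h2 := hstep m hm
      push_cast
      push_cast at h1
      linarith
  have habs : |q b - q 0| < (b : ℤ) := hdiffbound b le_rfl 0 (by omega)
  rw [hlin b le_rfl] at habs
  have habs' : |(b:ℤ)| * |δ| < (b:ℤ) := by
    rw [← abs_mul]
    simpa using habs
  have hδ0 : δ = 0 := by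
    by_contra h
    have h1 : (1:ℤ) ≤ |δ| := Int.one_le_abs (by simpa using h)
    have h2 : |(b:ℤ)| = (b:ℤ) := abs_of_nonneg (by positivity)
    nlinarith
  rw [hδ0] at hδe
  have : (n:ℤ) ∣ (e:ℤ) := by simpa using hδe.symm.dvd
  have : n ∣ e := by exact_mod_cast this
  have := Nat.le_of_dvd (by omega) this
  omega

theorem stmt_18 (k : ℕ) (hk : 3 ≤ k) :
    ∃ M : ℕ, k * (k - 1) ≤ M ∧
      ∃ c : ZMod M → Fin 2,
        ∀ A : Finset (ZMod M), IsAP M k A → ¬ ∃ i, ∀ x ∈ A, c x = i := by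
  set b := k - 1 with hbdef
  have hb : 2 ≤ b := by omega
  have hb0 : 0 < b := by omega
  set M := 2 * b * b with hMdef
  set n := 2 * b with hndef
  have hdvd : n ∣ M := ⟨b, rfl⟩
  have hM0 : 0 < M := by positivity
  haveI : NeZero M := ⟨by omega⟩
  refine ⟨M, ?_, ?_⟩
  · -- k * (k-1) ≤ 2b²
    have h1 : k ≤ 2 * b := by omega
    calc k * (k - 1) = k * b := by rw [hbdef]
      _ ≤ (2 * b) * b := Nat.mul_le_mul_right b h1
  · refine ⟨fun x => ⟨x.val % n / b, ?_⟩, ?_⟩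
    · have h1 : x.val % n < n := Nat.mod_lt _ (by omega)
      exact (Nat.div_lt_iff_lt_mul hb0).mpr (by omega)
    · rintro A ⟨d, hcard, t, hA⟩ ⟨i₀, hmono⟩
      -- value of the color on AP elements
      have hval : ∀ i : ℕ, ((t + (i : ZMod M) * d).val) % n = (t.val + i * (d.val % n)) % n := by
        intro i
        have e1 : (t + (i : ZMod M) * d).val = (t.val + ((i : ZMod M) * d).val) % M :=
          ZMod.val_add _ _
        have e2 : ((i : ZMod M) * d).val = ((i % M) * d.val) % M := by
          rw [ZMod.val_mul, ZMod.val_natCast]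
        rw [e1, e2]
        have s1 : (t.val + (i % M * d.val) % M) % M % n = (t.val + (i % M * d.val) % M) % n :=
          Nat.mod_mod_of_dvd _ hdvd
        rw [s1]
        have s2 : (i % M * d.val) % M ≡ i % M * d.val [MOD n] := Nat.mod_mod_of_dvd _ hdvd
        have s3 : i % M ≡ i [MOD n] := Nat.mod_mod_of_dvd _ hdvd
        have s4 : d.val % n ≡ d.val [MOD n] := Nat.mod_mod_of_dvd _ dvd_rfl
        have : t.val + (i % M * d.val) % M ≡ t.val + i * (d.val % n) [MOD n] :=
          Nat.ModEq.add_left _ (s2.trans ((s3.mul_right _).trans ((s4.mul_left i).symm)))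
        exact this
      set col := (i₀ : Fin 2).val with hcol
      have H : ∀ i, i < k → (t.val + i * (d.val % n)) % n / b = col := by
        intro i hi
        have hmem : t + (i : ZMod M) * d ∈ A := by
          rw [hA]
          exact Finset.mem_image.mpr ⟨i, Finset.mem_range.mpr hi, rfl⟩
        have := hmono _ hmem
        have hv := congrArg Fin.val this
        simp only at hv
        rw [← hval i]
        exact hv
      set e := d.val % n with hedef
      by_cases he : e = 0
      · -- degenerate case : b * d = 0 in ZMod M, so the AP has < k elements
        obtain ⟨s, hs⟩ : n ∣ d.val := Nat.dvd_of_mod_eq_zero he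
        have hbd : ((b : ℕ) : ZMod M) * d = 0 := by
          have h1 : ((d.val : ℕ) : ZMod M) = d := ZMod.natCast_zmod_val d
          rw [← h1, ← Nat.cast_mul]
          rw [ZMod.natCast_eq_zero_iff]
          exact ⟨s, by rw [hs, hndef, hMdef]; ring⟩
        set f : ℕ → ZMod M := fun i => t + (i : ZMod M) * d with hf
        have hfb : f b = f 0 := by
          simp only [hf, hbd, Nat.cast_zero, zero_mul, add_zero]
        have himg : (Finset.range k).image f = ((Finset.range k).erase b).image f := by
          apply Finset.Subset.antisymm
          · intro x hx
            obtain ⟨j, hj, rfl⟩ := Finset.mem_image.mp hx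
            by_cases hjb : j = b
            · refine Finset.mem_image.mpr ⟨0, ?_, ?_⟩
              · exact Finset.mem_erase.mpr ⟨by omega, Finset.mem_range.mpr (by omega)⟩
              · rw [hjb]; exact hfb.symm
            · exact Finset.mem_image.mpr ⟨j, Finset.mem_erase.mpr ⟨hjb, hj⟩, rfl⟩
          · exact Finset.image_subset_image (Finset.erase_subset _ _)
        have hle : A.card ≤ k - 1 := by
          rw [hA, himg]
          calc (((Finset.range k).erase b).image f).card ≤ ((Finset.range k).erase b).card :=
              Finset.card_image_le
            _ = k - 1 := by
              rw [Finset.card_erase_of_mem (Finset.mem_range.mpr (by omega)), Finset.card_range]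
        omega
      · -- main case : apply the core lemma
        have he1 : 1 ≤ e := by omega
        have he2 : e < 2 * b := by
          rw [hedef]
          exact Nat.mod_lt _ (by omega)
        exact core_lemma b e t.val col (by omega) he1 he2 (fun i hi => H i (by omega))
end

section
/- Let k ≥ 3 be an integer. Then W_c(k,3) > k²; equivalently, there exists an integer M ≥ k² and a 3-coloring of Z_M with no monochromatic k-term cyclic arithmetic progression mod M, for every candidate value N ≤ k² of W_c(k,3). -/
namespace Stmt19Aux

def acl (k a : ℕ) : ℕ := if 3*a < k then 0 else if 3*a < 2*k then 1 else 2
def bcl (k b : ℕ) : ℕ := if 2*k ≤ 3*b then 1 else 0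
def fcol (k x : ℕ) : ℕ := (acl k (x % k) + bcl k (x / k)) % 3

lemma acl_lt (k a : ℕ) : acl k a < 3 := by unfold acl; split_ifs <;> omega
lemma bcl_le (k b : ℕ) : bcl k b ≤ 1 := by unfold bcl; split_ifs <;> omega
lemma acl_zero (k v : ℕ) (h : 3*v < k) : acl k v = 0 := by
  unfold acl; split_ifs <;> omega
lemma acl_one (k v : ℕ) (h1 : k ≤ 3*v) (h2 : 3*v < 2*k) : acl k v = 1 := by
  unfold acl; split_ifs <;> omega
lemma acl_two (k v : ℕ) (h1 : 2*k ≤ 3*v) : acl k v = 2 := by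
  unfold acl; split_ifs <;> omega

lemma fcol_lt (k x : ℕ) : fcol k x < 3 := Nat.mod_lt _ (by norm_num)

lemma addmul_mod (k a Y : ℕ) (hk : 0 < k) (ha : a < k) :
    (a + k*Y) % (k*k) = a + k*(Y % k) := by
  have h1 : (a + k*Y) % (k*k) = (a % (k*k) + (k*Y) % (k*k)) % (k*k) := Nat.add_mod _ _ _
  have h2 : (k*Y) % (k*k) = k*(Y % k) := Nat.mul_mod_mul_left k Y k
  have ha2 : a < k*k := lt_of_lt_of_le ha (Nat.le_mul_of_pos_left k hk)
  have hy : Y % k ≤ k - 1 := by have := Nat.mod_lt Y hk; omega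
  have h3 : k*(Y % k) ≤ k*(k-1) := Nat.mul_le_mul_left k hy
  have h4 : k*(k-1) + k = k*k := by
    have h5 : k*(k-1) + k*1 = k*((k-1)+1) := (Nat.mul_add k _ _).symm
    have h6 : (k-1)+1 = k := by omega
    rw [h6] at h5
    omega
  have h6 : a + k*(Y%k) < k*k := by omega
  rw [h1, h2, Nat.mod_eq_of_lt ha2, Nat.mod_eq_of_lt h6]

lemma key1 (k base E j : ℕ) (hk : 0 < k) :
    (base + j*(k*E)) % (k*k) = base % k + k*((base/k + j*E) % k) := by
  have hb : k * (base / k) + base % k = base := Nat.div_add_mod base k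
  have h1 : base + j*(k*E) = base % k + k*(base/k + j*E) := by
    conv_lhs => rw [← hb]
    ring
  rw [h1, addmul_mod k _ _ hk (Nat.mod_lt _ hk)]

lemma fcol_split (k a z : ℕ) (hk : 0 < k) (ha : a < k) :
    fcol k (a + k*z) = (acl k a + bcl k z) % 3 := by
  unfold fcol
  rw [Nat.add_mul_mod_self_left, Nat.mod_eq_of_lt ha,
    Nat.add_mul_div_left _ _ hk, Nat.div_eq_of_lt ha, Nat.zero_add]


lemma PH (k E c n lo hi : ℕ) (hcop : Nat.Coprime E k) (hnk : n ≤ k) (hsize : hi - lo < n) :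
    ∃ j, j < n ∧ ¬(lo ≤ (c + j*E) % k ∧ (c + j*E) % k < hi) := by
  by_contra hcon
  push_neg at hcon
  have hk : 0 < k := by omega
  have hinj : Set.InjOn (fun j : ℕ => (c + j*E) % k) (Finset.range n) := by
    intro j1 h1 j2 h2 heq
    simp only [Finset.coe_range, Set.mem_Iio] at h1 h2
    rcases Nat.le_total j1 j2 with hle | hle
    · have hmod : (c + j1*E) ≡ (c + j2*E) [MOD k] := heq
      have hdvd : k ∣ (c + j2*E) - (c + j1*E) :=
        (Nat.modEq_iff_dvd' (by exact Nat.add_le_add_left (Nat.mul_le_mul_right E hle) c)).mp hmod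
      rw [Nat.add_sub_add_left, ← Nat.sub_mul] at hdvd
      have hdd := (Nat.Coprime.dvd_of_dvd_mul_right hcop.symm hdvd)
      have hlt : j2 - j1 < k := by omega
      have h0 : j2 - j1 = 0 := Nat.eq_zero_of_dvd_of_lt hdd hlt
      omega
    · have hmod : (c + j2*E) ≡ (c + j1*E) [MOD k] := heq.symm
      have hdvd : k ∣ (c + j1*E) - (c + j2*E) :=
        (Nat.modEq_iff_dvd' (by exact Nat.add_le_add_left (Nat.mul_le_mul_right E hle) c)).mp hmod
      rw [Nat.add_sub_add_left, ← Nat.sub_mul] at hdvd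
      have hdd := (Nat.Coprime.dvd_of_dvd_mul_right hcop.symm hdvd)
      have hlt : j1 - j2 < k := by omega
      have h0 : j1 - j2 = 0 := Nat.eq_zero_of_dvd_of_lt hdd hlt
      omega
  have hmaps : ∀ j ∈ Finset.range n, (c + j*E) % k ∈ Finset.Ico lo hi := by
    intro j hj
    rcases hcon j (Finset.mem_range.mp hj) with ⟨h1, h2⟩
    exact Finset.mem_Ico.mpr ⟨h1, h2⟩
  have hcard := Finset.card_le_card_of_injOn _ hmaps hinj
  rw [Finset.card_range, Nat.card_Ico] at hcard
  omega

lemma exists_j (D k g : ℕ) (hD : 0 < D) (hk : 0 < k) (hg : Nat.gcd D k = g) (hgk : g < k) :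
    ∃ j q : ℕ, j * D = k * q + g := by
  have hg0 : 0 < g := hg ▸ Nat.gcd_pos_of_pos_right D hk
  have hdvdk : g ∣ k := hg ▸ Nat.gcd_dvd_right D k
  have hdvdD : g ∣ D := hg ▸ Nat.gcd_dvd_left D k
  set m := k / g with hm
  have hkm : g * m = k := Nat.mul_div_cancel' hdvdk
  have hm0 : 0 < m := Nat.div_pos (Nat.le_of_dvd hk hdvdk) hg0
  have hm1 : m ≠ 1 := by
    intro h
    rw [h, Nat.mul_one] at hkm
    omega
  have hm2 : 2 ≤ m := by omega
  haveI : NeZero m := ⟨by omega⟩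
  set D' := D / g with hD'
  have hDD' : g * D' = D := Nat.mul_div_cancel' hdvdD
  have hcop : Nat.Coprime D' m := by
    rw [hD', hm, ← hg]
    exact Nat.coprime_div_gcd_div_gcd (hg ▸ hg0)
  set j := ((D' : ZMod m)⁻¹).val with hj
  have hinv : ((D' : ZMod m) * (D' : ZMod m)⁻¹) = 1 := ZMod.coe_mul_inv_eq_one D' hcop
  have hcast : ((D' * j : ℕ) : ZMod m) = ((1 : ℕ) : ZMod m) := by
    push_cast
    rw [hj, ZMod.natCast_zmod_val]
    rw [hinv]
  have hmod : (D' * j) % m = 1 % m := (ZMod.natCast_eq_natCast_iff' _ _ _).mp hcast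
  have h1m : 1 % m = 1 := Nat.mod_eq_of_lt (by omega)
  have hqm : D' * j = m * ((D' * j)/m) + 1 := by
    conv_lhs => rw [← Nat.div_add_mod (D'*j) m]
    rw [hmod, h1m]
  refine ⟨j, (D'*j)/m, ?_⟩
  calc j*D = g*(D'*j) := by rw [← hDD']; ring
  _ = g*(m*((D'*j)/m) + 1) := by rw [← hqm]
  _ = (g*m)*((D'*j)/m) + g := by ring
  _ = k*((D'*j)/m) + g := by rw [hkm]


theorem main (k T D γ : ℕ) (hk : 3 ≤ k) (hD0 : 0 < D)
    (hval : Nat.gcd D (k*k) ≤ k) (hγ : γ < 3)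
    (hmono : ∀ i, i < k → fcol k ((T + i*D) % (k*k)) = γ) : False := by
  have hk0 : 0 < k := by omega
  set g := Nat.gcd D k with hg
  have hgdvd : g ∣ k := Nat.gcd_dvd_right D k
  have hgD : g ∣ D := Nat.gcd_dvd_left D k
  have hg0 : 0 < g := Nat.gcd_pos_of_pos_right D hk0
  by_cases hgk : g = k
  · -- case (i): k ∣ D
    have hkD : k ∣ D := hgk ▸ hgD
    set E := D / k with hE
    have hDE : k * E = D := Nat.mul_div_cancel' hkD
    have hcop : Nat.Coprime E k := by
      have h1 : Nat.gcd (k*E) (k*k) = k * Nat.gcd E k := Nat.gcd_mul_left k E k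
      rw [hDE] at h1
      have h2 : k * Nat.gcd E k ≤ k * 1 := by rw [Nat.mul_one]; omega
      have h3 : Nat.gcd E k ≤ 1 := Nat.le_of_mul_le_mul_left h2 hk0
      have h4 : Nat.gcd E k ≠ 0 := Nat.gcd_ne_zero_right (by omega)
      unfold Nat.Coprime
      omega
    have hcolor : ∀ i, i < k → (acl k (T % k) + bcl k ((T/k + i*E) % k)) % 3 = γ := by
      intro i hi
      have h1 := hmono i hi
      rw [show i*D = i*(k*E) by rw [hDE], key1 k T E i hk0,
        fcol_split k _ _ hk0 (Nat.mod_lt _ hk0)] at h1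
      exact h1
    obtain ⟨j0, hj0, hv0⟩ := PH k E (T/k) k ((2*k+2)/3) k hcop (le_refl k) (by omega)
    obtain ⟨j1, hj1, hv1⟩ := PH k E (T/k) k 0 ((2*k+2)/3) hcop (le_refl k) (by omega)
    have hm0 : (T/k + j0*E) % k < k := Nat.mod_lt _ hk0
    have hm1 : (T/k + j1*E) % k < k := Nat.mod_lt _ hk0
    have hb0 : bcl k ((T/k + j0*E) % k) = 0 := by
      unfold bcl
      rw [if_neg]
      omega
    have hb1 : bcl k ((T/k + j1*E) % k) = 1 := by
      unfold bcl
      rw [if_pos]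
      omega
    have e0 := hcolor j0 hj0
    have e1 := hcolor j1 hj1
    rw [hb0] at e0
    rw [hb1] at e1
    omega
  · -- g < k
    have hglt : g < k := lt_of_le_of_ne (Nat.le_of_dvd hk0 hgdvd) hgk
    set m := k / g with hm
    have hkm : g * m = k := Nat.mul_div_cancel' hgdvd
    obtain ⟨j, q, hjq⟩ := exists_j D k g hD0 hk0 hg.symm hglt
    by_cases h3g : 3*g ≤ k
    · -- case (ii)
      set r := T % g with hr
      set w := (T % k) / g with hw0
      have hrg : r < g := Nat.mod_lt _ hg0
      have hw : T % k = g * w + r := by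
        have h1 : g * ((T % k) / g) + (T % k) % g = T % k := Nat.div_add_mod _ g
        rw [← hw0] at h1
        have h2 : (T % k) % g = T % g := Nat.mod_mod_of_dvd T hgdvd
        omega
      have hwm : w < m := by
        rw [hw0, Nat.div_lt_iff_lt_mul hg0]
        calc T % k < k := Nat.mod_lt _ hk0
        _ = m * g := by rw [Nat.mul_comm]; exact hkm.symm
      -- key2 : realize any a-value r + g*y
      have key2 : ∀ y : ℕ, r + g*y < k → ∃ i, i < k ∧ (T + i*D) % k = r + g*y := by
        intro y hy
        refine ⟨((y + (m - w))*j) % k, Nat.mod_lt _ hk0, ?_⟩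
        have hcast : ((T + (((y + (m - w))*j) % k) * D : ℕ) : ZMod k)
            = ((r + g*y : ℕ) : ZMod k) := by
          have hT : (T : ZMod k) = (g : ZMod k) * w + r := by
            have h1 : T = k * (T/k) + (g*w + r) := by
              have := Nat.div_add_mod T k
              omega
            rw [h1]
            push_cast [ZMod.natCast_self]
            ring
          have hjD : ((j*D : ℕ) : ZMod k) = (g : ZMod k) := by
            rw [hjq]
            push_cast [ZMod.natCast_self]
            ring
          have hgm : (g : ZMod k) * m = 0 := by
            have : ((g*m : ℕ) : ZMod k) = ((k : ℕ) : ZMod k) := by rw [hkm]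
            push_cast [ZMod.natCast_self] at this
            exact this
          have hmod : ((((y + (m - w))*j) % k : ℕ) : ZMod k)
              = (((y + (m - w))*j : ℕ) : ZMod k) := ZMod.natCast_mod _ k
          push_cast at hmod ⊢
          rw [hmod]
          have hmw : ((m - w : ℕ) : ZMod k) = (m : ZMod k) - w := by
            push_cast [Nat.cast_sub hwm.le]
            ring
          push_cast at hmw
          rw [hmw]
          have hjD' : (j : ZMod k) * D = (g : ZMod k) := by push_cast at hjD; exact hjD
          rw [hT]
          have expand : (g : ZMod k) * w + r + (y + (m - w)) * j * D
              = (g : ZMod k)*w + r + (y + (m - w)) * g := by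
            rw [mul_assoc, hjD']
          rw [expand]
          linear_combination hgm
        have hmodeq : (T + (((y + (m - w))*j) % k) * D) % k = (r + g*y) % k :=
          (ZMod.natCast_eq_natCast_iff' _ _ _).mp hcast
        rw [Nat.mod_eq_of_lt hy] at hmodeq
        exact hmodeq
      -- color equation at an attained a-value
      have hcoleq : ∀ v : ℕ, v < k → (∃ i, i < k ∧ (T + i*D) % k = v) →
          ∃ B, B ≤ 1 ∧ (acl k v + B) % 3 = γ := by
        intro v hv ⟨i, hi, hiv⟩
        have h1 := hmono i hi
        unfold fcol at h1
        rw [Nat.mod_mod_of_dvd _ (Dvd.intro k rfl), hiv] at h1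
        exact ⟨bcl k ((T + i*D) % (k*k) / k), bcl_le _ _, h1⟩
      -- three targets
      have hv0 : r + g*0 < k := by omega
      have ha0 : acl k (r + g*0) = 0 := acl_zero _ _ (by omega)
      have hPm : g*(m-1) + g = k := by
        have h5 : g*(m-1) + g*1 = g*((m-1)+1) := (Nat.mul_add g _ _).symm
        have hm3 : 3 ≤ m := by
          have := Nat.le_of_mul_le_mul_left (show g*3 ≤ g*m by rw [Nat.mul_comm g 3]; omega) hg0
          omega
        have h6 : (m-1)+1 = m := by omega
        rw [h6] at h5
        omega
      have hv2 : r + g*(m-1) < k := by omega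
      have ha2 : acl k (r + g*(m-1)) = 2 := acl_two _ _ (by omega)
      -- middle target via ceiling division
      have hy1 : ∃ y1, k ≤ 3*(r + g*y1) ∧ 3*(r + g*y1) < k + 3*g := by
        set e := (k - 3*r) + 3*g - 1 with he
        set y1 := e / (3*g) with hy1def
        have hda : 3*g*(e/(3*g)) + e % (3*g) = e := Nat.div_add_mod e (3*g)
        rw [← hy1def] at hda
        have hre : e % (3*g) < 3*g := Nat.mod_lt _ (by omega)
        have hQ : 3*g*y1 = 3*(g*y1) := by ring
        refine ⟨y1, by omega, by omega⟩
      obtain ⟨y1, hy1a, hy1b⟩ := hy1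
      have hv1 : r + g*y1 < k := by omega
      have ha1 : acl k (r + g*y1) = 1 := acl_one _ _ (by omega) (by omega)
      obtain ⟨B0, hB0, e0⟩ := hcoleq _ hv0 (key2 0 hv0)
      obtain ⟨B1, hB1, e1⟩ := hcoleq _ hv1 (key2 y1 hv1)
      obtain ⟨B2, hB2, e2⟩ := hcoleq _ hv2 (key2 (m-1) hv2)
      rw [ha0] at e0
      rw [ha1] at e1
      rw [ha2] at e2
      omega
    · -- case (iii): k = 2g
      have hm0 : 0 < m := Nat.div_pos (Nat.le_of_dvd hk0 hgdvd) hg0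
      have hm1 : m ≠ 1 := by
        intro h
        rw [h, Nat.mul_one] at hkm
        omega
      have hm3 : m < 3 := by
        by_contra hge
        push_neg at hge
        have h5 : g*3 ≤ g*m := Nat.mul_le_mul_left g hge
        rw [hkm] at h5
        omega
      have hm2 : m = 2 := by omega
      have hk2g : g*2 = k := by rw [← hm2]; exact hkm
      set E := D / g with hE
      have hDE : g * E = D := Nat.mul_div_cancel' hgD
      have hodd : E % 2 = 1 := by
        rcases Nat.even_or_odd E with he | ho
        · exfalso
          obtain ⟨h, hh⟩ := he
          have hkdD : k ∣ D := ⟨h, by rw [← hDE, hh, ← hk2g]; ring⟩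
          have := Nat.gcd_eq_right hkdD
          omega
        · exact Nat.odd_iff.mp ho
      have hcop : Nat.Coprime E k := by
        set c' := Nat.gcd E k with hc'
        have hc1 : g * c' ∣ D := by
          rw [← hDE]
          exact Nat.mul_dvd_mul_left g (Nat.gcd_dvd_left E k)
        have hc2 : g * c' ∣ k * k := Nat.mul_dvd_mul hgdvd (Nat.gcd_dvd_right E k)
        have hc3 : g * c' ∣ Nat.gcd D (k*k) := Nat.dvd_gcd hc1 hc2
        have hgcd0 : 0 < Nat.gcd D (k*k) := Nat.gcd_pos_of_pos_right _ (Nat.mul_pos hk0 hk0)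
        have hc4 : g * c' ≤ k := le_trans (Nat.le_of_dvd hgcd0 hc3) hval
        have hc5 : c' ≤ 2 := by
          have h6 : g * c' ≤ g * 2 := by omega
          exact Nat.le_of_mul_le_mul_left h6 hg0
        have hc0 : c' ≠ 0 := Nat.gcd_ne_zero_right (by omega)
        have hcne2 : c' ≠ 2 := by
          intro h2
          have h7 : 2 ∣ E := h2 ▸ Nat.gcd_dvd_left E k
          omega
        unfold Nat.Coprime
        omega
      have hDk : D % k = g := by
        have h1 : D = k * (E/2) + g := by
          have h2 : E = 2*(E/2) + 1 := by omega
          calc D = g*E := hDE.symm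
          _ = g*(2*(E/2)+1) := by rw [← h2]
          _ = (g*2)*(E/2) + g := by ring
          _ = k*(E/2) + g := by rw [hk2g]
        rw [h1, Nat.mul_add_mod]
        exact Nat.mod_eq_of_lt hglt
      have h2D : 2*D = k*E := by
        calc 2*D = (g*2)*E := by rw [← hDE]; ring
        _ = k*E := by rw [hk2g]
      have heven : ∀ j, j < g → (acl k (T % k) + bcl k ((T/k + j*E) % k)) % 3 = γ := by
        intro j hj
        have h1 := hmono (2*j) (by omega)
        rw [show (2*j)*D = j*(k*E) by rw [← h2D]; ring] at h1
        rw [key1 k T E j hk0, fcol_split k _ _ hk0 (Nat.mod_lt _ hk0)] at h1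
        exact h1
      set S := (T + D) % (k*k) with hS
      have hoddc : ∀ j, j < g → (acl k (S % k) + bcl k ((S/k + j*E) % k)) % 3 = γ := by
        intro j hj
        have h1 := hmono (2*j+1) (by omega)
        have h2 : T + (2*j+1)*D = (T + D) + j*(k*E) := by rw [← h2D]; ring
        rw [h2, ← Nat.mod_add_mod, ← hS, key1 k S E j hk0,
          fcol_split k _ _ hk0 (Nat.mod_lt _ hk0)] at h1
        exact h1
      have hSk : S % k = (T % k + g) % k := by
        rw [hS, Nat.mod_mod_of_dvd _ (Dvd.intro k rfl), Nat.add_mod, hDk]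
      obtain ⟨j0, hj0, hw0⟩ := PH k E (T/k) g ((2*k+2)/3) k hcop (by omega) (by omega)
      obtain ⟨j1, hj1, hw1⟩ := PH k E (S/k) g ((2*k+2)/3) k hcop (by omega) (by omega)
      have hb0 : bcl k ((T/k + j0*E) % k) = 0 := by
        have := Nat.mod_lt (T/k + j0*E) hk0
        unfold bcl
        rw [if_neg]
        omega
      have hb1 : bcl k ((S/k + j1*E) % k) = 0 := by
        have := Nat.mod_lt (S/k + j1*E) hk0
        unfold bcl
        rw [if_neg]
        omega
      have e0 := heven j0 hj0
      have e1 := hoddc j1 hj1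
      rw [hb0] at e0
      rw [hb1] at e1
      have hTk : T % k < k := Nat.mod_lt _ hk0
      have hacl : acl k (T % k) ≠ acl k (S % k) := by
        rw [hSk]
        rcases Nat.lt_or_ge (T % k) g with hlt | hge
        · have hlt2 : T % k + g < k := by omega
          rw [Nat.mod_eq_of_lt hlt2]
          unfold acl
          split_ifs <;> omega
        · have h6 : k ≤ T % k + g := by omega
          have h5 : T % k + g - k = T % k - g := by omega
          have h7 : T % k - g < k := by omega
          rw [Nat.mod_eq_sub_mod h6, h5, Nat.mod_eq_of_lt h7]
          unfold acl
          split_ifs <;> omega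
      have hA := acl_lt k (T % k)
      have hA' := acl_lt k (S % k)
      omega

end Stmt19Aux

open Stmt19Aux in
theorem stmt_19 (k : ℕ) (hk : 3 ≤ k) :
    ∃ M : ℕ, k ^ 2 ≤ M ∧
      ∃ c : ZMod M → Fin 3,
        ∀ A : Finset (ZMod M), IsAP M k A → ¬ ∃ i, ∀ x ∈ A, c x = i := by
  have hk0 : 0 < k := by omega
  refine ⟨k^2, le_refl _, ?_⟩
  haveI : NeZero (k^2) := ⟨by positivity⟩
  refine ⟨fun x => ⟨fcol k x.val, fcol_lt k x.val⟩, ?_⟩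
  rintro A ⟨d, hcard, t, hA⟩ ⟨γf, hγf⟩
  have hd0 : d ≠ 0 := by
    rintro rfl
    have hAt : A = {t} := by
      rw [hA]
      have : (fun i : ℕ => t + (i : ZMod (k^2)) * 0) = fun _ => t := by
        funext i
        rw [mul_zero, add_zero]
      rw [this]
      rw [Finset.image_const (by simp [Finset.nonempty_range_iff]; omega) t]
    rw [hAt, Finset.card_singleton] at hcard
    omega
  set T := t.val with hT
  set D := d.val with hD
  have hD0 : 0 < D := by
    have := (ZMod.val_eq_zero d).not.mpr hd0
    omega
  have hinj : Set.InjOn (fun i : ℕ => t + (i : ZMod (k^2)) * d) (Finset.range k) := by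
    apply Finset.injOn_of_card_image_eq
    rw [← hA, hcard, Finset.card_range]
  have hval : Nat.gcd D (k*k) ≤ k := by
    by_contra hgt
    push_neg at hgt
    set G := Nat.gcd D (k*k) with hG
    have hGdvdD : G ∣ D := Nat.gcd_dvd_left _ _
    have hGdvdk2 : G ∣ k*k := Nat.gcd_dvd_right _ _
    obtain ⟨D2, hD2⟩ := hGdvdD
    obtain ⟨c2, hc2⟩ := hGdvdk2
    set mm := (k*k)/G with hmm
    have hG0 : 0 < G := by omega
    have hmmc : mm = c2 := by rw [hmm, hc2, Nat.mul_div_cancel_left c2 hG0]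
    have hmm1 : 0 < mm := Nat.div_pos (Nat.le_of_dvd (Nat.mul_pos hk0 hk0) ⟨c2, hc2⟩) hG0
    have hmmk : mm < k := by
      rw [hmm, Nat.div_lt_iff_lt_mul hG0]
      exact (Nat.mul_lt_mul_left hk0).mpr hgt
    have hdvd : k*k ∣ mm * D := by
      refine ⟨D2, ?_⟩
      rw [hmmc, hD2, hc2]
      ring
    have hzero : ((mm : ℕ) : ZMod (k^2)) * d = 0 := by
      have h1 : ((mm * D : ℕ) : ZMod (k^2)) = 0 := by
        rw [ZMod.natCast_eq_zero_iff]
        rwa [pow_two]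
      push_cast at h1
      rwa [hD, ZMod.natCast_zmod_val] at h1
    have heq : t + (mm : ZMod (k^2)) * d = t + ((0:ℕ) : ZMod (k^2)) * d := by
      rw [hzero]
      push_cast
      rw [zero_mul, add_zero]
    have := hinj (by simp only [Finset.coe_range, Set.mem_Iio]; omega)
      (by simp only [Finset.coe_range, Set.mem_Iio]; omega) heq
    omega
  have hmono : ∀ i, i < k → fcol k ((T + i*D) % (k*k)) = (γf : ℕ) := by
    intro i hi
    have hx : (t + (i : ZMod (k^2)) * d) ∈ A := by
      rw [hA]
      exact Finset.mem_image.mpr ⟨i, Finset.mem_range.mpr hi, rfl⟩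
    have h1 := hγf _ hx
    have hv : (t + (i : ZMod (k^2)) * d).val = (T + i*D) % (k*k) := by
      have h2 : t + (i : ZMod (k^2)) * d = ((T + i*D : ℕ) : ZMod (k^2)) := by
        push_cast
        rw [hT, hD, ZMod.natCast_zmod_val, ZMod.natCast_zmod_val]
      rw [h2, ZMod.val_natCast, pow_two]
    have h3 := congrArg Fin.val h1
    simp only at h3
    rw [← hv]
    exact h3
  exact Stmt19Aux.main k T D (γf : ℕ) hk hD0 hval γf.isLt hmono
end
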